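/- arXiv:1909.13630 — 2 statements merged into one kernel-verified Lean document; each statement's English description precedes it below -/
import Mathlib

section
/- (Theorem 2) Let n ≥ 2 and let ρ = ρ₁ ⊗ ρ₂ ⊗ … ⊗ ρ_n be a pure fully separable density matrix on (ℂ^d)^{⊗n} (each ρ_j a density matrix on ℂ^d). Then for every k = 1,…,d²−1, the Ky Fan k-norm of the matricization T_{1|2|…|n} equals √(2ⁿ(d−1)ⁿ/dⁿ). -/
open Matrix ComplexOrder

/-- The singular values of a real matrix `M`: square roots of eigenvalues of `Mᴴ * M`. -/
noncomputable def singVals {α β : Type*} [Fintype α] [Fintype β] [DecidableEq β]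
    (M : Matrix α β ℝ) : β → ℝ :=
  fun i => Real.sqrt ((Matrix.isHermitian_conjTranspose_mul_self M).eigenvalues i)

/-- The Ky Fan `k`-norm of a real matrix: the sum of its `k` largest singular values
(realized as the largest sum of singular values over index sets of size at most `k`). -/
noncomputable def kyFan {α β : Type*} [Fintype α] [Fintype β] [DecidableEq β]
    (k : ℕ) (M : Matrix α β ℝ) : ℝ :=
  (Finset.univ.powerset.filter (fun s : Finset β => s.card ≤ k)).sup'
    ⟨∅, by simp⟩ (fun s => ∑ i ∈ s, singVals M i)

/-- The full `n`-body correlation tensor entry `t_{a 0, …, a (n-1)}` of `ρ`,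
i.e. `tr (ρ · (λ_{a 0} ⊗ ⋯ ⊗ λ_{a (n-1)}))`. -/
noncomputable def corrFull {n d : ℕ} (lam : Fin (d ^ 2 - 1) → Matrix (Fin d) (Fin d) ℂ)
    (ρ : Matrix (Fin n → Fin d) (Fin n → Fin d) ℂ) (a : Fin n → Fin (d ^ 2 - 1)) : ℝ :=
  (Matrix.trace (ρ * Matrix.of (fun v w : Fin n → Fin d => ∏ j, lam (a j) (v j) (w j)))).re

/-! ### Auxiliary lemmas -/

lemma trace_mul_of_prod {n d : ℕ} (f g : Fin n → Matrix (Fin d) (Fin d) ℂ) :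
    (Matrix.of (fun v w : Fin n → Fin d => ∏ j, f j (v j) (w j)) *
     Matrix.of (fun v w : Fin n → Fin d => ∏ j, g j (v j) (w j))).trace
    = ∏ j, (f j * g j).trace := by
  classical
  calc (Matrix.of (fun v w : Fin n → Fin d => ∏ j, f j (v j) (w j)) *
     Matrix.of (fun v w : Fin n → Fin d => ∏ j, g j (v j) (w j))).trace
      = ∑ v : Fin n → Fin d, ∑ w : Fin n → Fin d,
          ∏ j, (f j (v j) (w j) * g j (w j) (v j)) := by
        simp [Matrix.trace, Matrix.diag, Matrix.mul_apply, Finset.prod_mul_distrib]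
    _ = ∑ v : Fin n → Fin d, ∏ j, ∑ y : Fin d, f j (v j) y * g j y (v j) := by
        refine Finset.sum_congr rfl fun v _ => ?_
        rw [Finset.prod_univ_sum (fun _ => Finset.univ)
          (fun j y => f j (v j) y * g j y (v j)), Fintype.piFinset_univ]
    _ = ∏ j, ∑ x : Fin d, ∑ y : Fin d, f j x y * g j y x := by
        rw [Finset.prod_univ_sum (fun _ => Finset.univ)
          (fun j x => ∑ y : Fin d, f j x y * g j y x), Fintype.piFinset_univ]
    _ = ∏ j, (f j * g j).trace := by
        refine Finset.prod_congr rfl fun j _ => ?_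
        simp [Matrix.trace, Matrix.diag, Matrix.mul_apply]

lemma trace_of_prod {n d : ℕ} (f : Fin n → Matrix (Fin d) (Fin d) ℂ) :
    (Matrix.of (fun v w : Fin n → Fin d => ∏ j, f j (v j) (w j))).trace
    = ∏ j, (f j).trace := by
  classical
  calc (Matrix.of (fun v w : Fin n → Fin d => ∏ j, f j (v j) (w j))).trace
      = ∑ v : Fin n → Fin d, ∏ j, f j (v j) (v j) := by
        simp [Matrix.trace, Matrix.diag]
    _ = ∏ j, ∑ x : Fin d, f j x x := by
        rw [Finset.prod_univ_sum (fun _ => Finset.univ)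
          (fun j x => f j x x), Fintype.piFinset_univ]
    _ = _ := by simp [Matrix.trace, Matrix.diag]

lemma trace_mul_real {d : ℕ} {A B : Matrix (Fin d) (Fin d) ℂ}
    (hA : A.IsHermitian) (hB : B.IsHermitian) :
    (A * B).trace = (((A * B).trace.re : ℝ) : ℂ) := by
  have h : (starRingEnd ℂ) ((A * B).trace) = (A * B).trace := by
    calc (starRingEnd ℂ) ((A * B).trace) = ((A * B)ᴴ).trace := by
          rw [Matrix.trace_conjTranspose]; rfl
      _ = (A * B).trace := by
          rw [Matrix.conjTranspose_mul, hA.eq, hB.eq, Matrix.trace_mul_comm]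
  exact (Complex.conj_eq_iff_re.mp h).symm

section Spectral

variable {𝕜 : Type*} [RCLike 𝕜] {n : Type*} [Fintype n] [DecidableEq n]

lemma my_trace_eq_sum_eigenvalues {A : Matrix n n 𝕜} (hA : A.IsHermitian) :
    A.trace = ∑ i, (hA.eigenvalues i : 𝕜) := by
  conv_lhs => rw [hA.spectral_theorem, Unitary.conjStarAlgAut_apply]
  rw [Matrix.trace_mul_cycle, Unitary.coe_star_mul_self, Matrix.one_mul, Matrix.trace_diagonal]
  rfl

lemma my_trace_sq_eq_sum_sq {A : Matrix n n 𝕜} (hA : A.IsHermitian) :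
    (A * A).trace = ∑ i, (hA.eigenvalues i : 𝕜) ^ 2 := by
  set U : Matrix n n 𝕜 := (hA.eigenvectorUnitary : Matrix n n 𝕜) with hU
  set D : Matrix n n 𝕜 := diagonal (RCLike.ofReal ∘ hA.eigenvalues) with hD
  have hSU : star U * U = 1 := Matrix.mem_unitaryGroup_iff'.mp hA.eigenvectorUnitary.2
  have hcan : ∀ X : Matrix n n 𝕜, star U * (U * X) = X := fun X => by
    rw [← Matrix.mul_assoc, hSU, Matrix.one_mul]
  have e2 : A * A = U * (D * (D * star U)) := by
    conv_lhs => rw [hA.spectral_theorem, Unitary.conjStarAlgAut_apply]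
    simp only [Matrix.mul_assoc, ← hU, ← hD]
    rw [hcan]
  rw [e2, Matrix.trace_mul_comm]
  simp only [Matrix.mul_assoc]
  rw [hSU, Matrix.mul_one, hD, Matrix.diagonal_mul_diagonal, Matrix.trace_diagonal]
  simp [sq]

lemma eigenvalues_rank_one {A : Matrix n n ℝ} (hA : A.IsHermitian)
    {t : ℝ} (hsq : A * A = t • A) (htr : A.trace = t) (ht : 0 < t) :
    ∃ i₀ : n, hA.eigenvalues i₀ = t ∧ ∀ i, i ≠ i₀ → hA.eigenvalues i = 0 := by
  classical
  set μ := hA.eigenvalues with hμ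
  set U : Matrix n n ℝ := (hA.eigenvectorUnitary : Matrix n n ℝ) with hU
  set D : Matrix n n ℝ := diagonal (RCLike.ofReal ∘ μ) with hD
  have key : ∀ i, μ i = 0 ∨ μ i = t := by
    have hdiag : star U * A * U = D := by
      have := hA.conjStarAlgAut_star_eigenvectorUnitary
      rwa [Unitary.conjStarAlgAut_star_apply] at this
    have hUS : U * star U = 1 := Matrix.mem_unitaryGroup_iff.mp hA.eigenvectorUnitary.2
    have hcan : ∀ X : Matrix n n ℝ, U * (star U * X) = X := fun X => by
      rw [← Matrix.mul_assoc, hUS, Matrix.one_mul]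
    have h2 : star U * (A * A) * U = D * D := by
      rw [← hdiag]
      simp only [Matrix.mul_assoc]
      rw [hcan]
    have h3 : star U * (A * A) * U = t • D := by
      rw [hsq, Matrix.mul_smul, Matrix.smul_mul, hdiag]
    intro i
    have h4 := congrFun (congrFun (h2.symm.trans h3) i) i
    simp only [hD, Matrix.diagonal_mul_diagonal, Matrix.diagonal_apply_eq, Matrix.smul_apply,
      Function.comp_apply, smul_eq_mul] at h4
    have h5 : μ i * μ i = t * μ i := by exact_mod_cast h4
    rcases eq_or_ne (μ i) 0 with h | h
    · exact Or.inl h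
    · exact Or.inr (mul_right_cancel₀ h h5)
  have hsum : ∑ i, μ i = t := by
    have := my_trace_eq_sum_eigenvalues hA
    rw [htr] at this
    exact_mod_cast this.symm
  set S := Finset.univ.filter (fun i => μ i = t) with hS
  have hsum2 : ∑ i, μ i = S.card • t := by
    rw [← Finset.sum_filter_add_sum_filter_not Finset.univ (fun i => μ i = t)]
    have h1 : ∑ i ∈ S, μ i = S.card • t := by
      rw [Finset.sum_congr rfl (fun i hi => (Finset.mem_filter.mp hi).2), Finset.sum_const]
    have h2 : ∑ i ∈ Finset.univ.filter (fun i => ¬ μ i = t), μ i = 0 := by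
      refine Finset.sum_eq_zero fun i hi => ?_
      rcases key i with h | h
      · exact h
      · exact absurd h (Finset.mem_filter.mp hi).2
    rw [h1, h2, add_zero]
  have hcard : S.card = 1 := by
    have h6 : (S.card : ℝ) * t = t := by rw [← nsmul_eq_mul, ← hsum2, hsum]
    have h7 := mul_right_cancel₀ (ne_of_gt ht) (h6.trans (one_mul t).symm)
    exact_mod_cast h7
  obtain ⟨i₀, hi₀⟩ := Finset.card_eq_one.mp hcard
  refine ⟨i₀, ?_, ?_⟩
  · have : i₀ ∈ S := hi₀ ▸ Finset.mem_singleton_self i₀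
    exact (Finset.mem_filter.mp this).2
  · intro i hi
    rcases key i with h | h
    · exact h
    · exact absurd (by
        have : i ∈ S := Finset.mem_filter.mpr ⟨Finset.mem_univ i, h⟩
        rwa [hi₀, Finset.mem_singleton] at this) hi

end Spectral

lemma sum_sq_bloch {d : ℕ} (hd : 2 ≤ d)
    (lam : Fin (d ^ 2 - 1) → Matrix (Fin d) (Fin d) ℂ)
    (hherm : ∀ i, (lam i).IsHermitian)
    (htr : ∀ i, (lam i).trace = 0)
    (horth : ∀ i j, (lam i * lam j).trace = if i = j then 2 else 0)
    (A : Matrix (Fin d) (Fin d) ℂ) (hA : A.IsHermitian)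
    (h1 : A.trace = 1) (h2 : (A * A).trace = 1) :
    ∑ i, ((A * lam i).trace.re) ^ 2 = 2 * ((d : ℝ) - 1) / d := by
  classical
  have hd0 : (d : ℂ) ≠ 0 := Nat.cast_ne_zero.mpr (by omega)
  have hd0' : (d : ℝ) ≠ 0 := Nat.cast_ne_zero.mpr (by omega)
  set g : Option (Fin (d ^ 2 - 1)) → Matrix (Fin d) (Fin d) ℂ :=
    fun o => Option.elim o 1 lam with hg
  set c : Option (Fin (d ^ 2 - 1)) → ℂ := fun o => Option.elim o (d : ℂ) (fun _ => (2:ℂ)) with hc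
  have horthg : ∀ a b, (g a * g b).trace = if a = b then c a else 0 := by
    rintro (_|i) (_|j)
    · simp [hg, hc, Matrix.trace_one]
    · simp [hg, hc, htr j]
    · simp [hg, hc, htr i]
    · simpa [hg, hc] using horth i j
  have hcne : ∀ a, c a ≠ 0 := by
    rintro (_|i)
    · exact hd0
    · exact two_ne_zero
  have hkey : ∀ (z : Option (Fin (d ^ 2 - 1)) → ℂ) (b : Option (Fin (d ^ 2 - 1))),
      ((∑ a, z a • g a) * g b).trace = z b * c b := by
    intro z b
    rw [Matrix.sum_mul, Matrix.trace_sum]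
    have e : ∀ a, ((z a • g a) * g b).trace = z a * (g a * g b).trace := fun a => by
      rw [Matrix.smul_mul, Matrix.trace_smul, smul_eq_mul]
    rw [Finset.sum_congr rfl fun a _ => e a]
    simp only [horthg, mul_ite, mul_zero]
    rw [Finset.sum_ite_eq' Finset.univ b (fun a => z a * c a)]
    simp
  have hli : LinearIndependent ℂ g := by
    rw [Fintype.linearIndependent_iff]
    intro z hz b
    have h0 : ((∑ a, z a • g a) * g b).trace = 0 := by
      rw [hz, Matrix.zero_mul, Matrix.trace_zero]
    rw [hkey] at h0
    exact (mul_eq_zero.mp h0).resolve_right (hcne b)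
  have hcard : Fintype.card (Option (Fin (d ^ 2 - 1))) =
      Module.finrank ℂ (Matrix (Fin d) (Fin d) ℂ) := by
    rw [Module.finrank_matrix, Module.finrank_self]
    simp only [Fintype.card_option, Fintype.card_fin, mul_one]
    have h4 : 1 ≤ d ^ 2 := by nlinarith
    have : d ^ 2 = d * d := sq d
    omega
  have hsp := hli.span_eq_top_of_card_eq_finrank hcard
  have hmem : A ∈ Submodule.span ℂ (Set.range g) := hsp ▸ Submodule.mem_top
  obtain ⟨z, hzA⟩ := (Submodule.mem_span_range_iff_exists_fun ℂ).mp hmem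
  have hAg : ∀ b, (A * g b).trace = z b * c b := fun b => by
    conv_lhs => rw [← hzA]
    exact hkey z b
  have hznone : z none = 1 / (d : ℂ) := by
    have h5 := hAg none
    simp only [hg, hc, Option.elim] at h5
    rw [Matrix.mul_one, h1] at h5
    field_simp
    linear_combination -h5
  set r : Fin (d ^ 2 - 1) → ℝ := fun i => ((A * lam i).trace).re with hr
  have hzi : ∀ i, z (some i) = ((r i : ℝ) : ℂ) / 2 := by
    intro i
    have h5 := hAg (some i)
    simp only [hg, hc, Option.elim] at h5
    have h6 : (A * lam i).trace = ((r i : ℝ) : ℂ) := trace_mul_real hA (hherm i)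
    rw [h6] at h5
    rw [eq_div_iff (two_ne_zero' ℂ)]
    linear_combination -h5
  have hAA : (1 : ℂ) = ∑ b, z b * (z b * c b) := by
    calc (1 : ℂ) = (A * A).trace := h2.symm
      _ = (A * (∑ b, z b • g b)).trace := by rw [hzA]
      _ = ∑ b, z b * (A * g b).trace := by
          rw [Matrix.mul_sum, Matrix.trace_sum]
          exact Finset.sum_congr rfl fun b _ => by
            rw [Matrix.mul_smul, Matrix.trace_smul, smul_eq_mul]
      _ = ∑ b, z b * (z b * c b) := Finset.sum_congr rfl fun b _ => by rw [hAg b]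
  rw [Fintype.sum_option] at hAA
  have hnone : z none * (z none * c none) = 1 / (d : ℂ) := by
    simp only [hc, Option.elim, hznone]
    field_simp
  have hsome : ∀ i, z (some i) * (z (some i) * c (some i)) = ((r i : ℝ) : ℂ) ^ 2 / 2 := by
    intro i
    simp only [hc, Option.elim, hzi i]
    ring
  rw [hnone, Finset.sum_congr rfl fun i _ => hsome i] at hAA
  have hsum : (((∑ i, r i ^ 2 : ℝ)) : ℂ) = 2 - 2 / (d : ℂ) := by
    push_cast
    have : ∑ i, (((r i : ℝ) : ℂ)) ^ 2 / 2 = (∑ i, (((r i : ℝ) : ℂ)) ^ 2) / 2 := by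
      rw [Finset.sum_div]
    rw [this] at hAA
    linear_combination (-2 : ℂ) * hAA
  have hreal : ∑ i, r i ^ 2 = 2 - 2 / (d : ℝ) := by
    have h7 : ((2 - 2 / (d : ℝ) : ℝ) : ℂ) = 2 - 2 / (d : ℂ) := by push_cast; ring
    exact_mod_cast hsum.trans h7.symm
  rw [show ∑ i, ((A * lam i).trace.re) ^ 2 = ∑ i, r i ^ 2 from rfl, hreal]
  field_simp

lemma kyFan_eq_of_concentrated {α β : Type*} [Fintype α] [Fintype β] [DecidableEq β]
    (M : Matrix α β ℝ) (k : ℕ) (hk : 1 ≤ k) (i₀ : β)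
    (h0 : ∀ i, i ≠ i₀ → singVals M i = 0) :
    kyFan k M = singVals M i₀ := by
  have hnn : ∀ i, 0 ≤ singVals M i := fun i => Real.sqrt_nonneg _
  have hsum : ∀ s : Finset β, ∑ i ∈ s, singVals M i ≤ singVals M i₀ := by
    intro s
    calc ∑ i ∈ s, singVals M i ≤ ∑ i, singVals M i :=
        Finset.sum_le_sum_of_subset_of_nonneg (Finset.subset_univ s) (fun i _ _ => hnn i)
      _ = singVals M i₀ := Fintype.sum_eq_single i₀ h0
  apply le_antisymm
  · exact Finset.sup'_le _ _ fun s _ => hsum s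
  · have hmem : ({i₀} : Finset β) ∈
        Finset.univ.powerset.filter (fun s : Finset β => s.card ≤ k) := by
      simp [Finset.mem_filter, hk]
    have h := Finset.le_sup' (fun s : Finset β => ∑ i ∈ s, singVals M i) hmem
    simpa [kyFan] using h

lemma trace_sq_mem {d : ℕ} {ρ : Matrix (Fin d) (Fin d) ℂ} (hpsd : ρ.PosSemidef)
    (h1 : ρ.trace = 1) : ∃ s : ℝ, (ρ * ρ).trace = (s : ℂ) ∧ 0 ≤ s ∧ s ≤ 1 := by
  have hH := hpsd.1
  set ν := hH.eigenvalues with hν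
  have hsum : ∑ i, ν i = 1 := by
    have h := my_trace_eq_sum_eigenvalues hH
    rw [h1] at h
    have h2 : ((∑ i, ν i : ℝ) : ℂ) = 1 := by rw [hν]; push_cast; exact h.symm
    exact_mod_cast h2
  refine ⟨∑ i, ν i ^ 2, ?_, ?_, ?_⟩
  · rw [my_trace_sq_eq_sum_sq hH]; push_cast; rfl
  · positivity
  · calc ∑ i, ν i ^ 2 ≤ (∑ i, ν i) ^ 2 :=
        Finset.sum_sq_le_sq_sum_of_nonneg (fun i _ => hpsd.eigenvalues_nonneg i)
      _ = 1 := by rw [hsum]; ring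

lemma all_eq_one {n : ℕ} (s : Fin n → ℝ) (h0 : ∀ j, 0 ≤ s j) (h1 : ∀ j, s j ≤ 1)
    (hp : ∏ j, s j = 1) : ∀ j, s j = 1 := by
  intro j
  have hrest : ∏ i ∈ Finset.univ.erase j, s i ≤ 1 :=
    Finset.prod_le_one (fun i _ => h0 i) (fun i _ => h1 i)
  have hrest0 : 0 ≤ ∏ i ∈ Finset.univ.erase j, s i :=
    Finset.prod_nonneg fun i _ => h0 i
  have hfac : s j * ∏ i ∈ Finset.univ.erase j, s i = 1 := by
    rw [Finset.mul_prod_erase Finset.univ s (Finset.mem_univ j)]; exact hp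
  nlinarith [h1 j, h0 j]

/-- (Theorem 2) For a pure fully separable `n`-partite state (`n = m + 2 ≥ 2`),
all Ky Fan `k`-norms of the matricization `T_{1|2|…|n}` equal `√(2ⁿ(d-1)ⁿ/dⁿ)`. -/
theorem kyFan_T_of_pure_fully_separable_multipartite (d : ℕ) (hd : 2 ≤ d)
    (lam : Fin (d ^ 2 - 1) → Matrix (Fin d) (Fin d) ℂ)
    (hherm : ∀ i, (lam i).IsHermitian)
    (htr : ∀ i, (lam i).trace = 0)
    (horth : ∀ i j, (lam i * lam j).trace = if i = j then 2 else 0)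
    (m : ℕ)
    (ρs : Fin (m + 2) → Matrix (Fin d) (Fin d) ℂ)
    (hρs : ∀ j, (ρs j).PosSemidef ∧ (ρs j).trace = 1)
    (ρ : Matrix (Fin (m + 2) → Fin d) (Fin (m + 2) → Fin d) ℂ)
    (hprod : ∀ v w, ρ v w = ∏ j, ρs j (v j) (w j))
    (hpure : ρ * ρ = ρ)
    (k : ℕ) (hk1 : 1 ≤ k) (hk2 : k ≤ d ^ 2 - 1) :
    kyFan k (Matrix.of fun (r : Fin (d ^ 2 - 1)) (c : Fin (m + 1) → Fin (d ^ 2 - 1)) =>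
        corrFull lam ρ (Fin.cons r c))
      = Real.sqrt (2 ^ (m + 2) * ((d : ℝ) - 1) ^ (m + 2) / (d : ℝ) ^ (m + 2)) := by
  classical
  have hd2 : (2 : ℝ) ≤ (d : ℝ) := by exact_mod_cast hd
  have hdpos : (0 : ℝ) < d := by linarith
  -- step 0: ρ as a product matrix
  have hρof : ρ = Matrix.of (fun v w : Fin (m + 2) → Fin d => ∏ j, ρs j (v j) (w j)) := by
    ext v w
    exact hprod v w
  -- Bloch components
  set u : Fin (m + 2) → Fin (d ^ 2 - 1) → ℝ :=
    fun j i => ((ρs j * lam i).trace).re with hu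
  -- correlation entries factorize
  have hcorr : ∀ a : Fin (m + 2) → Fin (d ^ 2 - 1),
      corrFull lam ρ a = ∏ j, u j (a j) := by
    intro a
    show (Matrix.trace (ρ * Matrix.of (fun v w : Fin (m + 2) → Fin d =>
        ∏ j, lam (a j) (v j) (w j)))).re = _
    rw [hρof, trace_mul_of_prod ρs (fun j => lam (a j))]
    have e : ∀ j : Fin (m + 2), (ρs j * lam (a j)).trace = ((u j (a j) : ℝ) : ℂ) :=
      fun j => trace_mul_real (hρs j).1.1 (hherm (a j))
    rw [Finset.prod_congr rfl fun j _ => e j, ← Complex.ofReal_prod]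
    exact Complex.ofReal_re _
  -- purity of each factor
  have htrρ : ρ.trace = 1 := by
    rw [hρof, trace_of_prod]
    simp [(fun j => (hρs j).2)]
  have htr2 : ∏ j, (ρs j * ρs j).trace = 1 := by
    rw [← trace_mul_of_prod ρs ρs, ← hρof, hpure, htrρ]
  obtain ⟨s, hs1, hs2, hs3⟩ :
      ∃ s : Fin (m + 2) → ℝ, (∀ j, (ρs j * ρs j).trace = ((s j : ℝ) : ℂ)) ∧
        (∀ j, 0 ≤ s j) ∧ (∀ j, s j ≤ 1) := by
    choose s h1 h2 h3 using fun j => trace_sq_mem (hρs j).1 (hρs j).2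
    exact ⟨s, h1, h2, h3⟩
  have hsprod : ∏ j, s j = 1 := by
    have : ((∏ j, s j : ℝ) : ℂ) = 1 := by
      push_cast
      rw [← Finset.prod_congr rfl fun j _ => hs1 j]
      exact htr2
    exact_mod_cast this
  have hpur : ∀ j, (ρs j * ρs j).trace = 1 := by
    intro j
    rw [hs1 j, all_eq_one s hs2 hs3 hsprod j]
    norm_num
  -- Bloch vector norms
  set q : ℝ := 2 * ((d : ℝ) - 1) / d with hqdef
  have hq : ∀ j, ∑ i, u j i ^ 2 = q :=
    fun j => sum_sq_bloch hd lam hherm htr horth (ρs j) (hρs j).1.1 (hρs j).2 (hpur j)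
  have hq0 : 0 < q := by
    rw [hqdef]
    apply div_pos (by linarith) (by linarith)
  -- the matricization
  set M : Matrix (Fin (d ^ 2 - 1)) (Fin (m + 1) → Fin (d ^ 2 - 1)) ℝ :=
    Matrix.of (fun (r : Fin (d ^ 2 - 1)) (c : Fin (m + 1) → Fin (d ^ 2 - 1)) =>
      corrFull lam ρ (Fin.cons r c)) with hMdef
  set V : (Fin (m + 1) → Fin (d ^ 2 - 1)) → ℝ :=
    fun c => ∏ j : Fin (m + 1), u j.succ (c j) with hVdef
  have hMrc : ∀ r c, M r c = u 0 r * V c := by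
    intro r c
    show corrFull lam ρ (Fin.cons r c) = _
    rw [hcorr, Fin.prod_univ_succ]
    simp [hVdef]
  have hVsum : ∑ c, V c ^ 2 = q ^ (m + 1) := by
    have e : ∀ c : Fin (m + 1) → Fin (d ^ 2 - 1),
        V c ^ 2 = ∏ j, (u j.succ (c j)) ^ 2 := fun c => by
      rw [hVdef]
      exact (Finset.prod_pow Finset.univ 2 _).symm
    rw [Finset.sum_congr rfl fun c _ => e c]
    calc ∑ c : Fin (m + 1) → Fin (d ^ 2 - 1), ∏ j, (u j.succ (c j)) ^ 2
        = ∏ j : Fin (m + 1), ∑ i, (u j.succ i) ^ 2 := by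
          rw [Finset.prod_univ_sum (fun _ => Finset.univ)
            (fun (j : Fin (m + 1)) (i : Fin (d ^ 2 - 1)) => u j.succ i ^ 2),
            Fintype.piFinset_univ]
      _ = ∏ _j : Fin (m + 1), q := Finset.prod_congr rfl fun j _ => hq j.succ
      _ = q ^ (m + 1) := by
          rw [Finset.prod_const, Finset.card_univ, Fintype.card_fin]
  -- the Gram matrix
  have hAe : ∀ c c', (Mᴴ * M) c c' = q * (V c * V c') := by
    intro c c'
    rw [Matrix.mul_apply]
    simp only [Matrix.conjTranspose_apply, star_trivial]
    have e : ∀ r, M r c * M r c' = u 0 r ^ 2 * (V c * V c') := fun r => by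
      rw [hMrc r c, hMrc r c']; ring
    rw [Finset.sum_congr rfl fun r _ => e r, ← Finset.sum_mul, hq 0]
  have hsq : (Mᴴ * M) * (Mᴴ * M) = (q ^ (m + 2)) • (Mᴴ * M) := by
    ext c c''
    rw [Matrix.mul_apply]
    simp only [hAe, Matrix.smul_apply, smul_eq_mul]
    have e : ∀ c', (q * (V c * V c')) * (q * (V c' * V c''))
        = V c' ^ 2 * (q ^ 2 * (V c * V c'')) := fun c' => by ring
    rw [Finset.sum_congr rfl fun c' _ => e c', ← Finset.sum_mul, hVsum]
    ring
  have htrA : (Mᴴ * M).trace = q ^ (m + 2) := by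
    show ∑ c, (Mᴴ * M) c c = _
    rw [Finset.sum_congr rfl fun c (_ : c ∈ Finset.univ) => hAe c c]
    have e : ∀ c, q * (V c * V c) = q * V c ^ 2 := fun c => by ring
    rw [Finset.sum_congr rfl fun c _ => e c, ← Finset.mul_sum, hVsum]
    ring
  obtain ⟨i₀, hi₀, hzero⟩ := eigenvalues_rank_one
    (Matrix.isHermitian_conjTranspose_mul_self M) hsq htrA (pow_pos hq0 (m + 2))
  have hsv0 : ∀ i, i ≠ i₀ → singVals M i = 0 := by
    intro i hi
    rw [singVals, hzero i hi, Real.sqrt_zero]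
  have hfin : kyFan k M = Real.sqrt (q ^ (m + 2)) := by
    rw [kyFan_eq_of_concentrated M k hk1 i₀ hsv0, singVals, hi₀]
  rw [hfin]
  congr 1
  rw [hqdef, div_pow, mul_pow]
end

section
/- (Theorem 4(ii)) Let n ≥ 3, let j₁,…,j_n be a permutation of 1,…,n, and let ρ be a pure density matrix on (ℂ^d)^{⊗n} that is separable under at least one bipartition of {1,…,n} into two nonempty complementary subsets, but entangled (not separable) under the bipartition j₁…j_{n−1} | j_n. Then for every k = 1,…,d²−1: if n is odd, ‖T_{j₁…j_{n−1}|j_n}‖_k ≤ √(2ⁿ k (d^{⌊n/2⌋}−1)(d^{n−⌊n/2⌋}−1)/dⁿ); if n is even, ‖T_{j₁…j_{n−1}|j_n}‖_k ≤ √(2ⁿ k (d^{n/2}−1)²/dⁿ). -/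
open Matrix ComplexOrder

/-- Separability of an `n`-partite state (indexed by `Fin n → Fin d`) under the
bipartition `A | Aᶜ`: `ρ` is, up to the permutation of tensor factors, the tensor
product of a density matrix on the factors in `A` and one on the factors not in `A`. -/
def SepUnder {n d : ℕ} (ρ : Matrix (Fin n → Fin d) (Fin n → Fin d) ℂ)
    (A : Finset (Fin n)) : Prop :=
  ∃ (ρA : Matrix ({j // j ∈ A} → Fin d) ({j // j ∈ A} → Fin d) ℂ)
    (ρB : Matrix ({j // j ∉ A} → Fin d) ({j // j ∉ A} → Fin d) ℂ),
    ρA.PosSemidef ∧ ρA.trace = 1 ∧ ρB.PosSemidef ∧ ρB.trace = 1 ∧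
    ∀ v w, ρ v w = ρA (fun j => v j.1) (fun j => w j.1) * ρB (fun j => v j.1) (fun j => w j.1)

set_option maxHeartbeats 1000000
set_option linter.unusedSectionVars false
set_option linter.unusedSectionVars false
set_option maxHeartbeats 1000000


section Helpers

variable {D : Type*} [Fintype D] [DecidableEq D]

lemma trace_mul_eq (M N : Matrix D D ℂ) : (M * N).trace = ∑ v, ∑ w, M v w * N w v := by
  simp [Matrix.trace, Matrix.mul_apply, Matrix.diag]

lemma trace_conjTranspose_mul_self_re (X : Matrix D D ℂ) :
    ((Xᴴ * X).trace).re = ∑ v, ∑ w, Complex.normSq (X w v) := by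
  rw [trace_mul_eq]
  rw [Complex.re_sum]
  refine Finset.sum_congr rfl fun v _ => ?_
  rw [Complex.re_sum]
  refine Finset.sum_congr rfl fun w _ => ?_
  simp [Matrix.conjTranspose_apply, Complex.normSq_apply, Complex.mul_re]

lemma trace_conjTranspose_mul_self_re_nonneg (X : Matrix D D ℂ) :
    0 ≤ ((Xᴴ * X).trace).re := by
  rw [trace_conjTranspose_mul_self_re]
  exact Finset.sum_nonneg fun v _ => Finset.sum_nonneg fun w _ => Complex.normSq_nonneg _

lemma trace_eq_sum_eigs_real {A : Matrix D D ℝ} (hA : A.IsHermitian) :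
    A.trace = ∑ i, hA.eigenvalues i := by
  conv_lhs => rw [hA.spectral_theorem]
  rw [Unitary.conjStarAlgAut_apply]
  rw [Matrix.trace_mul_cycle]
  rw [Unitary.coe_star_mul_self]
  simp [Matrix.trace_diagonal]

lemma trace_complex_eq_sum_eigs {A : Matrix D D ℂ} (hA : A.IsHermitian) :
    A.trace = ∑ i, (hA.eigenvalues i : ℂ) := by
  conv_lhs => rw [hA.spectral_theorem]
  rw [Unitary.conjStarAlgAut_apply]
  rw [Matrix.trace_mul_cycle]
  rw [Unitary.coe_star_mul_self]
  simp [Matrix.trace_diagonal]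

lemma trace_sq_complex_eq_sum_eigs {A : Matrix D D ℂ} (hA : A.IsHermitian) :
    (A * A).trace = ∑ i, (hA.eigenvalues i : ℂ) ^ 2 := by
  set U : Matrix D D ℂ := (hA.eigenvectorUnitary : Matrix D D ℂ) with hU
  set Dg : Matrix D D ℂ := Matrix.diagonal (RCLike.ofReal ∘ hA.eigenvalues) with hDg
  have h : A * A = U * (Dg * Dg) * star U := by
    conv_lhs => rw [hA.spectral_theorem]
    rw [Unitary.conjStarAlgAut_apply]
    simp only [Matrix.mul_assoc]
    rw [← Matrix.mul_assoc (star U) U, Unitary.coe_star_mul_self, Matrix.one_mul]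
  rw [h, Matrix.trace_mul_cycle, ← Matrix.mul_assoc, Unitary.coe_star_mul_self, Matrix.one_mul]
  rw [hDg, Matrix.diagonal_mul_diagonal, Matrix.trace_diagonal]
  simp [sq]

lemma purity_le_one {A : Matrix D D ℂ} (hpsd : A.PosSemidef) (htr : A.trace = 1) :
    ((A * A).trace).re ≤ 1 := by
  have h1 : ∑ i, hpsd.1.eigenvalues i = 1 := by
    have := trace_complex_eq_sum_eigs hpsd.1
    rw [htr] at this
    have := congrArg Complex.re this.symm
    simpa [Complex.re_sum] using this
  have h2 : ((A * A).trace).re = ∑ i, hpsd.1.eigenvalues i ^ 2 := by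
    rw [trace_sq_complex_eq_sum_eigs hpsd.1, Complex.re_sum]
    simp [← Complex.ofReal_pow]
  rw [h2]
  calc ∑ i, hpsd.1.eigenvalues i ^ 2 ≤ (∑ i, hpsd.1.eigenvalues i) ^ 2 :=
        Finset.sum_sq_le_sq_sum_of_nonneg (fun i _ => hpsd.eigenvalues_nonneg i)
    _ = 1 := by rw [h1]; norm_num

end Helpers

section Bessel
variable {D ι : Type*} [Fintype D] [DecidableEq D] [Fintype ι] [DecidableEq ι]

lemma trace_mul_eq' (M N : Matrix D D ℂ) : (M * N).trace = ∑ v, ∑ w, M v w * N w v := by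
  simp [Matrix.trace, Matrix.mul_apply, Matrix.diag]

lemma trace_conjTranspose_mul_self_re_nonneg' (X : Matrix D D ℂ) : 0 ≤ ((Xᴴ * X).trace).re := by
  rw [trace_mul_eq', Complex.re_sum]
  refine Finset.sum_nonneg fun v _ => ?_
  rw [Complex.re_sum]
  refine Finset.sum_nonneg fun w _ => ?_
  have : (Xᴴ v w * X w v).re = Complex.normSq (X w v) := by
    simp [Matrix.conjTranspose_apply, Complex.normSq_apply, Complex.mul_re]
  rw [this]; exact Complex.normSq_nonneg _

lemma bessel (G : ι → Matrix D D ℂ) (c : ι → ℝ) (hc : ∀ i, 0 < c i)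
    (hG : ∀ i, (G i)ᴴ = G i)
    (ho : ∀ i j, (G i * G j).trace = if i = j then (c i : ℂ) else 0)
    (ρ : Matrix D D ℂ) (hρ : ρᴴ = ρ) :
    ∑ i, Complex.normSq ((G i * ρ).trace) / c i ≤ ((ρ * ρ).trace).re := by
  set t : ι → ℂ := fun i => (G i * ρ).trace with ht
  have htreal : ∀ i, (starRingEnd ℂ) (t i) = t i := by
    intro i
    have h1 : (G i * ρ)ᴴ = ρ * G i := by rw [Matrix.conjTranspose_mul, hG, hρ]
    calc (starRingEnd ℂ) (t i) = ((G i * ρ)ᴴ).trace := by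
          rw [Matrix.trace_conjTranspose]; rfl
      _ = (ρ * G i).trace := by rw [h1]
      _ = t i := by rw [Matrix.trace_mul_comm]
  set S : Matrix D D ℂ := ∑ i, (t i / (c i : ℂ)) • G i with hS
  set X : Matrix D D ℂ := ρ - S with hX
  have hXh : Xᴴ = X := by
    rw [hX, Matrix.conjTranspose_sub, hρ, hS, Matrix.conjTranspose_sum]
    congr 1
    refine Finset.sum_congr rfl fun i _ => ?_
    rw [Matrix.conjTranspose_smul, hG]
    congr 1
    simp only [star_div₀, RCLike.star_def, htreal, Complex.conj_ofReal]
  have hρS : (ρ * S).trace = ∑ i, t i ^ 2 / (c i : ℂ) := by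
    rw [hS, Matrix.mul_sum, Matrix.trace_sum]
    refine Finset.sum_congr rfl fun i _ => ?_
    rw [Matrix.mul_smul, Matrix.trace_smul, Matrix.trace_mul_comm]
    have hti : (G i * ρ).trace = t i := rfl
    rw [hti]; simp only [smul_eq_mul]; ring
  have hSρ : (S * ρ).trace = ∑ i, t i ^ 2 / (c i : ℂ) := by
    rw [hS, Matrix.sum_mul, Matrix.trace_sum]
    refine Finset.sum_congr rfl fun i _ => ?_
    rw [Matrix.smul_mul, Matrix.trace_smul]
    have hti : (G i * ρ).trace = t i := rfl
    rw [hti]; simp only [smul_eq_mul]; ring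
  have hSS : (S * S).trace = ∑ i, t i ^ 2 / (c i : ℂ) := by
    rw [hS, Matrix.sum_mul, Matrix.trace_sum]
    refine Finset.sum_congr rfl fun i _ => ?_
    rw [Matrix.smul_mul, Matrix.trace_smul, Matrix.mul_sum, Matrix.trace_sum]
    have h2 : ∀ j, ((G i * ((t j / (c j : ℂ)) • G j)).trace)
        = (t j / (c j : ℂ)) * (if i = j then (c i : ℂ) else 0) := fun j => by
      rw [Matrix.mul_smul, Matrix.trace_smul, ho]
      simp [smul_eq_mul]
    rw [Finset.sum_congr rfl fun j _ => h2 j]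
    simp only [mul_ite, mul_zero]
    rw [Finset.sum_ite_eq Finset.univ i (fun j => t j / (c j : ℂ) * (c i : ℂ))]
    have hci : (c i : ℂ) ≠ 0 := by
      exact_mod_cast (ne_of_gt (hc i))
    simp only [Finset.mem_univ, if_true, smul_eq_mul]
    field_simp
  have hexp : (Xᴴ * X).trace = (ρ * ρ).trace - ∑ i, t i ^ 2 / (c i : ℂ) := by
    rw [hXh, hX, Matrix.sub_mul, Matrix.mul_sub, Matrix.mul_sub, Matrix.trace_sub,
      Matrix.trace_sub, Matrix.trace_sub, hρS, hSρ, hSS]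
    ring
  have h0 := trace_conjTranspose_mul_self_re_nonneg' X
  rw [hexp] at h0
  have hre : ((ρ * ρ).trace - ∑ i, t i ^ 2 / (c i : ℂ)).re
      = ((ρ * ρ).trace).re - ∑ i, Complex.normSq (t i) / c i := by
    rw [Complex.sub_re, Complex.re_sum]
    congr 1
    refine Finset.sum_congr rfl fun i _ => ?_
    have hti : t i = ((t i).re : ℂ) := (Complex.conj_eq_iff_re.mp (htreal i)).symm
    rw [hti]
    have : (((t i).re : ℂ)) ^ 2 / ((c i : ℝ) : ℂ) = (((t i).re ^ 2 / c i : ℝ) : ℂ) := by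
      push_cast; ring
    rw [this, Complex.ofReal_re, Complex.normSq_ofReal]
    ring_nf
  rw [hre] at h0
  linarith

end Bessel

lemma trace_mul_eq'' {D : Type*} [Fintype D] (M N : Matrix D D ℂ) :
    (M * N).trace = ∑ v, ∑ w, M v w * N w v := by
  simp [Matrix.trace, Matrix.mul_apply, Matrix.diag]

section Tensor
variable {J : Type*} [Fintype J] [DecidableEq J] {d : ℕ}

lemma trace_tensor (f : J → Matrix (Fin d) (Fin d) ℂ) :
    (Matrix.of fun v w : J → Fin d => ∏ j, f j (v j) (w j)).trace = ∏ j, (f j).trace := by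
  have h1 : (Matrix.of fun v w : J → Fin d => ∏ j, f j (v j) (w j)).trace
      = ∑ v : J → Fin d, ∏ j, f j (v j) (v j) := by
    simp [Matrix.trace, Matrix.diag]
  rw [h1]
  have h2 : ∀ j, (f j).trace = ∑ x : Fin d, f j x x := fun j => by simp [Matrix.trace, Matrix.diag]
  rw [Finset.prod_congr rfl fun j _ => h2 j, Fintype.prod_sum]

lemma trace_tensor_mul (f g : J → Matrix (Fin d) (Fin d) ℂ) :
    ((Matrix.of fun v w : J → Fin d => ∏ j, f j (v j) (w j)) *
      (Matrix.of fun v w : J → Fin d => ∏ j, g j (v j) (w j))).trace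
    = ∏ j, (f j * g j).trace := by
  rw [trace_mul_eq'']
  have h1 : ∀ v w : J → Fin d,
      (Matrix.of fun v w : J → Fin d => ∏ j, f j (v j) (w j)) v w *
      (Matrix.of fun v w : J → Fin d => ∏ j, g j (v j) (w j)) w v
      = ∏ j, (f j (v j) (w j) * g j (w j) (v j)) := by
    intro v w
    simp only [Matrix.of_apply]
    rw [Finset.prod_mul_distrib]
  simp only [h1]
  have h2 : ∑ v : J → Fin d, ∑ w : J → Fin d, ∏ j, (f j (v j) (w j) * g j (w j) (v j))
      = ∑ q : (J → Fin d) × (J → Fin d), ∏ j, (f j (q.1 j) (q.2 j) * g j (q.2 j) (q.1 j)) :=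
    (Fintype.sum_prod_type (f := fun q : (J → Fin d) × (J → Fin d) => ∏ j, (f j (q.1 j) (q.2 j) * g j (q.2 j) (q.1 j)))).symm
  have h3 : ∑ q : (J → Fin d) × (J → Fin d), ∏ j, (f j (q.1 j) (q.2 j) * g j (q.2 j) (q.1 j))
      = ∑ x : J → Fin d × Fin d, ∏ j, (f j (x j).1 (x j).2 * g j (x j).2 (x j).1) :=
    (Fintype.sum_equiv (Equiv.arrowProdEquivProdArrow J (fun _ => Fin d) (fun _ => Fin d))
      (fun x => ∏ j, (f j (x j).1 (x j).2 * g j (x j).2 (x j).1))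
      (fun q => ∏ j, (f j (q.1 j) (q.2 j) * g j (q.2 j) (q.1 j)))
      (fun x => rfl)).symm
  have h4 : ∏ j, ∑ p : Fin d × Fin d, (f j p.1 p.2 * g j p.2 p.1)
      = ∑ x : J → Fin d × Fin d, ∏ j, (f j (x j).1 (x j).2 * g j (x j).2 (x j).1) :=
    Fintype.prod_sum _
  have h5 : ∀ j, (f j * g j).trace = ∑ p : Fin d × Fin d, (f j p.1 p.2 * g j p.2 p.1) := fun j => by
    rw [trace_mul_eq'']
    exact (Fintype.sum_prod_type (f := fun p : Fin d × Fin d => f j p.1 p.2 * g j p.2 p.1)).symm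
  rw [h2, h3, Finset.prod_congr rfl fun j _ => h5 j, h4]

lemma tensor_hermitian (f : J → Matrix (Fin d) (Fin d) ℂ) (hf : ∀ j, (f j).IsHermitian) :
    (Matrix.of fun v w : J → Fin d => ∏ j, f j (v j) (w j)).IsHermitian := by
  ext v w
  simp only [Matrix.conjTranspose_apply, Matrix.of_apply, star_prod]
  refine Finset.prod_congr rfl fun j _ => ?_
  conv_rhs => rw [← hf j]
  rfl

end Tensor

lemma subsystem_bound {J : Type*} [Fintype J] [DecidableEq J] [Nonempty J] {d : ℕ} (hd : 2 ≤ d)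
    (lam : Fin (d ^ 2 - 1) → Matrix (Fin d) (Fin d) ℂ)
    (hherm : ∀ i, (lam i).IsHermitian)
    (htr : ∀ i, (lam i).trace = 0)
    (horth : ∀ i j, (lam i * lam j).trace = if i = j then 2 else 0)
    (ρ : Matrix (J → Fin d) (J → Fin d) ℂ) (hpsd : ρ.PosSemidef) (htr1 : ρ.trace = 1) :
    ∑ b : J → Fin (d ^ 2 - 1), Complex.normSq
        ((ρ * Matrix.of (fun v w : J → Fin d => ∏ j, lam (b j) (v j) (w j))).trace)
      ≤ (2 : ℝ) ^ (Fintype.card J) * ((d : ℝ) ^ (Fintype.card J) - 1) / (d : ℝ) ^ (Fintype.card J) := by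
  have hd0 : (0 : ℝ) < (d : ℝ) := by
    have : (0 : ℕ) < d := lt_of_lt_of_le (by norm_num) hd
    exact_mod_cast this
  set h := Fintype.card J with hh
  have hdh : (0 : ℝ) < (d : ℝ) ^ h := by positivity
  set G : Option (J → Fin (d ^ 2 - 1)) → Matrix (J → Fin d) (J → Fin d) ℂ :=
    fun o => o.elim 1 (fun b => Matrix.of (fun v w : J → Fin d => ∏ j, lam (b j) (v j) (w j)))
    with hGdef
  set c : Option (J → Fin (d ^ 2 - 1)) → ℝ := fun o => o.elim ((d : ℝ) ^ h) (fun _ => 2 ^ h)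
    with hcdef
  have hc : ∀ o, 0 < c o := by
    rintro (_ | b)
    · exact hdh
    · exact pow_pos (by norm_num) h
  have hG : ∀ o, (G o)ᴴ = G o := by
    rintro (_ | b)
    · exact Matrix.conjTranspose_one
    · exact tensor_hermitian _ (fun j => hherm (b j))
  have hcardfun : (Fintype.card (J → Fin d) : ℂ) = ((d : ℂ) ^ h) := by
    rw [Fintype.card_fun, Fintype.card_fin]
    push_cast
    rfl
  have htrG : ∀ b : J → Fin (d ^ 2 - 1), (G (some b)).trace = 0 := by
    intro b
    rw [hGdef]
    show (Matrix.of (fun v w : J → Fin d => ∏ j, lam (b j) (v j) (w j))).trace = 0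
    rw [trace_tensor]
    obtain ⟨j⟩ := ‹Nonempty J›
    exact Finset.prod_eq_zero (Finset.mem_univ j) (htr (b j))
  have ho : ∀ o p, (G o * G p).trace = if o = p then (c o : ℂ) else 0 := by
    rintro (_ | b) (_ | b')
    · simp only [if_pos rfl]
      show ((1 : Matrix (J → Fin d) (J → Fin d) ℂ) * 1).trace = _
      rw [Matrix.one_mul, Matrix.trace_one, hcardfun, hcdef]
      norm_cast
    · simp only [reduceCtorEq, if_false]
      show ((1 : Matrix (J → Fin d) (J → Fin d) ℂ) * G (some b')).trace = 0
      rw [Matrix.one_mul]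
      exact htrG b'
    · simp only [reduceCtorEq, if_false]
      show (G (some b) * (1 : Matrix (J → Fin d) (J → Fin d) ℂ)).trace = 0
      rw [Matrix.mul_one]
      exact htrG b
    · show ((Matrix.of fun v w : J → Fin d => ∏ j, lam (b j) (v j) (w j)) *
          (Matrix.of fun v w : J → Fin d => ∏ j, lam (b' j) (v j) (w j))).trace = _
      rw [trace_tensor_mul]
      by_cases hb : b = b'
      · subst hb
        simp only [if_pos rfl]
        rw [Finset.prod_congr rfl fun j _ => horth (b j) (b j)]
        simp [hcdef, ← hh]
      · have hob : (some b : Option (J → Fin (d^2-1))) ≠ some b' := by simpa using hb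
        rw [if_neg hob]
        obtain ⟨j, hj⟩ : ∃ j, b j ≠ b' j := by
          by_contra hcon
          push_neg at hcon
          exact hb (funext hcon)
        refine Finset.prod_eq_zero (Finset.mem_univ j) ?_
        rw [horth, if_neg hj]
  have hb := bessel G c hc hG ho ρ hpsd.1
  rw [Fintype.sum_option] at hb
  have hnone : Complex.normSq ((G none * ρ).trace) / c none = 1 / (d : ℝ) ^ h := by
    show Complex.normSq (((1 : Matrix (J → Fin d) (J → Fin d) ℂ) * ρ).trace) / ((d : ℝ) ^ h) = _
    rw [Matrix.one_mul, htr1]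
    simp
  rw [hnone] at hb
  have hp := purity_le_one hpsd htr1
  have hsum : ∀ b : J → Fin (d ^ 2 - 1), Complex.normSq ((G (some b) * ρ).trace) / c (some b)
      = Complex.normSq ((ρ * Matrix.of (fun v w : J → Fin d => ∏ j, lam (b j) (v j) (w j))).trace)
        / 2 ^ h := by
    intro b
    rw [Matrix.trace_mul_comm]
    rfl
  rw [Finset.sum_congr rfl fun b _ => hsum b, ← Finset.sum_div] at hb
  have h2h : (0 : ℝ) < (2 : ℝ) ^ h := by positivity
  rw [le_div_iff₀ hdh]
  have hle : (∑ b : J → Fin (d ^ 2 - 1), Complex.normSq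
      ((ρ * Matrix.of (fun v w : J → Fin d => ∏ j, lam (b j) (v j) (w j))).trace)) / 2 ^ h
      ≤ 1 - 1 / (d : ℝ) ^ h := by linarith
  rw [div_le_iff₀ h2h] at hle
  calc (∑ b : J → Fin (d ^ 2 - 1), Complex.normSq
      ((ρ * Matrix.of (fun v w : J → Fin d => ∏ j, lam (b j) (v j) (w j))).trace)) * (d : ℝ) ^ h
      ≤ ((1 - 1 / (d : ℝ) ^ h) * 2 ^ h) * (d : ℝ) ^ h := by
        apply mul_le_mul_of_nonneg_right hle (le_of_lt hdh)
    _ = 2 ^ h * ((d : ℝ) ^ h - 1) := by field_simp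

def resEquiv {n : ℕ} (A : Finset (Fin n)) (X : Type*) :
    (Fin n → X) ≃ ({j // j ∈ A} → X) × ({j // j ∉ A} → X) where
  toFun v := (fun j => v j.1, fun j => v j.1)
  invFun p j := if h : j ∈ A then p.1 ⟨j, h⟩ else p.2 ⟨j, h⟩
  left_inv v := by
    funext j
    by_cases h : j ∈ A <;> simp [h]
  right_inv p := by
    refine Prod.ext ?_ ?_ <;> funext j
    · exact dif_pos j.2
    · exact dif_neg j.2

section Factor

variable {n d : ℕ} {A : Finset (Fin n)}
  (lam : Fin (d ^ 2 - 1) → Matrix (Fin d) (Fin d) ℂ)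

lemma trace_factor
    (ρ : Matrix (Fin n → Fin d) (Fin n → Fin d) ℂ)
    (ρA : Matrix ({j // j ∈ A} → Fin d) ({j // j ∈ A} → Fin d) ℂ)
    (ρB : Matrix ({j // j ∉ A} → Fin d) ({j // j ∉ A} → Fin d) ℂ)
    (hfact : ∀ v w, ρ v w = ρA (fun j => v j.1) (fun j => w j.1)
      * ρB (fun j => v j.1) (fun j => w j.1))
    (a : Fin n → Fin (d ^ 2 - 1)) :
    (ρ * Matrix.of (fun v w : Fin n → Fin d => ∏ j, lam (a j) (v j) (w j))).trace
    = (ρA * Matrix.of (fun v w : {j // j ∈ A} → Fin d =>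
        ∏ j, lam (a j.1) (v j) (w j))).trace
    * (ρB * Matrix.of (fun v w : {j // j ∉ A} → Fin d =>
        ∏ j, lam (a j.1) (v j) (w j))).trace := by

  set fA : ({j // j ∈ A} → Fin d) → ({j // j ∈ A} → Fin d) → ℂ :=
    fun x y => ρA x y * ∏ j, lam (a j.1) (y j) (x j) with hfA
  set fB : ({j // j ∉ A} → Fin d) → ({j // j ∉ A} → Fin d) → ℂ :=
    fun x y => ρB x y * ∏ j, lam (a j.1) (y j) (x j) with hfB
  have key : ∀ v w : Fin n → Fin d,
      ρ v w * (Matrix.of (fun v w : Fin n → Fin d => ∏ j, lam (a j) (v j) (w j))) w v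
      = fA (fun j => v j.1) (fun j => w j.1) * fB (fun j => v j.1) (fun j => w j.1) := by
    intro v w
    rw [hfact v w]
    simp only [Matrix.of_apply, hfA, hfB]
    rw [← Fintype.prod_subtype_mul_prod_subtype (fun j => j ∈ A)
      (fun j => lam (a j) (w j) (v j))]
    rw [mul_mul_mul_comm]
    congr!
  rw [trace_mul_eq'', trace_mul_eq'', trace_mul_eq'']
  calc ∑ v, ∑ w, ρ v w * (Matrix.of (fun v w : Fin n → Fin d => ∏ j, lam (a j) (v j) (w j))) w v
      = ∑ v, ∑ w, fA ((resEquiv A (Fin d)) v).1 ((resEquiv A (Fin d)) w).1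
          * fB ((resEquiv A (Fin d)) v).2 ((resEquiv A (Fin d)) w).2 := by
        exact Finset.sum_congr rfl fun v _ => Finset.sum_congr rfl fun w _ => key v w
    _ = ∑ v, ∑ q : _ × _, fA ((resEquiv A (Fin d)) v).1 q.1 * fB ((resEquiv A (Fin d)) v).2 q.2 := by
        refine Finset.sum_congr rfl fun v _ => ?_
        exact (Fintype.sum_equiv (resEquiv A (Fin d))
          (fun w => fA ((resEquiv A (Fin d)) v).1 ((resEquiv A (Fin d)) w).1
            * fB ((resEquiv A (Fin d)) v).2 ((resEquiv A (Fin d)) w).2)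
          (fun q => fA ((resEquiv A (Fin d)) v).1 q.1 * fB ((resEquiv A (Fin d)) v).2 q.2)
          (fun w => rfl))
    _ = ∑ p : _ × _, ∑ q : _ × _, fA p.1 q.1 * fB p.2 q.2 := by
        exact (Fintype.sum_equiv (resEquiv A (Fin d))
          (fun v => ∑ q : _ × _, fA ((resEquiv A (Fin d)) v).1 q.1
            * fB ((resEquiv A (Fin d)) v).2 q.2)
          (fun p => ∑ q : _ × _, fA p.1 q.1 * fB p.2 q.2)
          (fun v => rfl))
    _ = ∑ p1, ∑ p2, ∑ q1, ∑ q2, fA p1 q1 * fB p2 q2 := by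
        rw [Fintype.sum_prod_type]
        exact Finset.sum_congr rfl fun p1 _ => Finset.sum_congr rfl fun p2 _ =>
          Fintype.sum_prod_type _
    _ = ∑ p1, ∑ p2, (∑ q1, fA p1 q1) * (∑ q2, fB p2 q2) :=
        Finset.sum_congr rfl fun p1 _ => Finset.sum_congr rfl fun p2 _ =>
          (Finset.sum_mul_sum _ _ _ _).symm
    _ = (∑ x, ∑ y, fA x y) * (∑ x, ∑ y, fB x y) := (Finset.sum_mul_sum _ _ _ _).symm

lemma sum_normSq_factor
    (ρ : Matrix (Fin n → Fin d) (Fin n → Fin d) ℂ)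
    (ρA : Matrix ({j // j ∈ A} → Fin d) ({j // j ∈ A} → Fin d) ℂ)
    (ρB : Matrix ({j // j ∉ A} → Fin d) ({j // j ∉ A} → Fin d) ℂ)
    (hfact : ∀ v w, ρ v w = ρA (fun j => v j.1) (fun j => w j.1)
      * ρB (fun j => v j.1) (fun j => w j.1)) :
    ∑ a : Fin n → Fin (d ^ 2 - 1), Complex.normSq
        ((ρ * Matrix.of (fun v w : Fin n → Fin d => ∏ j, lam (a j) (v j) (w j))).trace)
    = (∑ b : {j // j ∈ A} → Fin (d ^ 2 - 1), Complex.normSq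
        ((ρA * Matrix.of (fun v w : {j // j ∈ A} → Fin d =>
          ∏ j, lam (b j) (v j) (w j))).trace))
    * (∑ b : {j // j ∉ A} → Fin (d ^ 2 - 1), Complex.normSq
        ((ρB * Matrix.of (fun v w : {j // j ∉ A} → Fin d =>
          ∏ j, lam (b j) (v j) (w j))).trace)) := by

  have step1 : ∑ a : Fin n → Fin (d ^ 2 - 1), Complex.normSq
        ((ρ * Matrix.of (fun v w : Fin n → Fin d => ∏ j, lam (a j) (v j) (w j))).trace)
      = ∑ p : ({j // j ∈ A} → Fin (d ^ 2 - 1)) × ({j // j ∉ A} → Fin (d ^ 2 - 1)),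
          Complex.normSq ((ρA * Matrix.of (fun v w : {j // j ∈ A} → Fin d =>
            ∏ j, lam (p.1 j) (v j) (w j))).trace)
          * Complex.normSq ((ρB * Matrix.of (fun v w : {j // j ∉ A} → Fin d =>
            ∏ j, lam (p.2 j) (v j) (w j))).trace) := by
    refine Fintype.sum_equiv (resEquiv A (Fin (d ^ 2 - 1))) _ _ ?_
    intro a
    rw [trace_factor lam ρ ρA ρB hfact a, Complex.normSq_mul]
    rfl
  rw [step1, Fintype.sum_prod_type]
  rw [Finset.sum_mul_sum]

end Factor

lemma kyFan_le_sqrt {α β : Type*} [Fintype α] [Fintype β] [DecidableEq β]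
    (k : ℕ) (M : Matrix α β ℝ) :
    kyFan k M ≤ Real.sqrt (k * ∑ c, ∑ r, (M r c) ^ 2) := by
  have hherm := Matrix.isHermitian_conjTranspose_mul_self M
  have hpsd : (Mᵀ * M).PosSemidef := by
    have := Matrix.posSemidef_conjTranspose_mul_self M
    exact this
  have hev : ∀ i, 0 ≤ hherm.eigenvalues i := fun i => hpsd.eigenvalues_nonneg i
  have htrace : ∑ i, hherm.eigenvalues i = ∑ c, ∑ r, (M r c) ^ 2 := by
    rw [← trace_eq_sum_eigs_real hherm]
    simp [Matrix.trace, Matrix.mul_apply, Matrix.diag, Matrix.transpose_apply, sq]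
  refine Finset.sup'_le _ _ fun s hs => ?_
  have hcard : s.card ≤ k := (Finset.mem_filter.mp hs).2
  have hnn : 0 ≤ ∑ i ∈ s, singVals M i :=
    Finset.sum_nonneg fun i _ => Real.sqrt_nonneg _
  rw [show (∑ i ∈ s, singVals M i) = Real.sqrt ((∑ i ∈ s, singVals M i) ^ 2) from
    (Real.sqrt_sq hnn).symm]
  apply Real.sqrt_le_sqrt
  calc (∑ i ∈ s, singVals M i) ^ 2 ≤ s.card * ∑ i ∈ s, (singVals M i) ^ 2 :=
        sq_sum_le_card_mul_sum_sq
    _ = s.card * ∑ i ∈ s, hherm.eigenvalues i := by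
        congr 1
        exact Finset.sum_congr rfl fun i _ => Real.sq_sqrt (hev i)
    _ ≤ k * ∑ i, hherm.eigenvalues i := by
        apply mul_le_mul (by exact_mod_cast hcard)
          (Finset.sum_le_sum_of_subset_of_nonneg (Finset.subset_univ s)
            (fun i _ _ => hev i))
          (Finset.sum_nonneg fun i _ => hev i) (by positivity)
    _ = k * ∑ c, ∑ r, (M r c) ^ 2 := by rw [htrace]

def snocPermEquiv {m : ℕ} (σ : Equiv.Perm (Fin (m + 3))) (X : Type*) :
    ((Fin (m + 2) → X) × X) ≃ (Fin (m + 3) → X) where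
  toFun p := fun j => (Fin.snoc p.1 p.2 : Fin (m + 3) → X) (σ.symm j)
  invFun g := (fun i => g (σ (Fin.castSucc i)), g (σ (Fin.last (m + 2))))
  left_inv p := by
    refine Prod.ext ?_ ?_
    · funext i
      show (Fin.snoc p.1 p.2 : Fin (m + 3) → X) (σ.symm (σ (Fin.castSucc i))) = p.1 i
      rw [Equiv.symm_apply_apply]
      exact Fin.snoc_castSucc _ _ _
    · show (Fin.snoc p.1 p.2 : Fin (m + 3) → X) (σ.symm (σ (Fin.last (m + 2)))) = p.2
      rw [Equiv.symm_apply_apply]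
      exact Fin.snoc_last _ _
  right_inv g := by
    funext j
    show (Fin.snoc (fun i => g (σ (Fin.castSucc i))) (g (σ (Fin.last (m + 2)))) : Fin (m + 3) → X) (σ.symm j) = g j
    have hj : j = σ (σ.symm j) := (Equiv.apply_symm_apply σ j).symm
    rw [hj]
    generalize σ.symm j = i
    rw [Equiv.symm_apply_apply]
    induction i using Fin.lastCases with
    | last => rw [Fin.snoc_last]
    | cast i' => rw [Fin.snoc_castSucc]

lemma sum_reindex_snoc {m N : ℕ} (σ : Equiv.Perm (Fin (m + 3))) (F : (Fin (m + 3) → Fin N) → ℝ) :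
    ∑ c : Fin N, ∑ r : Fin (m + 2) → Fin N, F (fun j => (Fin.snoc r c : Fin (m + 3) → Fin N) (σ.symm j))
      = ∑ a : Fin (m + 3) → Fin N, F a := by
  rw [Finset.sum_comm]
  rw [← Fintype.sum_prod_type (f := fun p : (Fin (m + 2) → Fin N) × Fin N =>
    F (fun j => (Fin.snoc p.1 p.2 : Fin (m + 3) → Fin N) (σ.symm j)))]
  exact Equiv.sum_comp (snocPermEquiv σ (Fin N)) F

lemma sum_pow_min_le {d n : ℕ} (hd : 2 ≤ d) :
    ∀ h : ℕ, 1 ≤ h → h ≤ n / 2 →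
      (d : ℝ) ^ (n / 2) + (d : ℝ) ^ (n - n / 2) ≤ (d : ℝ) ^ h + (d : ℝ) ^ (n - h) := by
  intro h h1 h2
  have hd1 : (1 : ℝ) ≤ (d : ℝ) := by exact_mod_cast le_trans (by norm_num) hd
  set q := n / 2 with hq
  have hqn : q ≤ n - q := by omega
  have e1 : (d : ℝ) ^ (n - h) = (d : ℝ) ^ (q - h) * (d : ℝ) ^ (n - q) := by
    rw [← pow_add]; congr 1; omega
  have e2 : (d : ℝ) ^ q = (d : ℝ) ^ (q - h) * (d : ℝ) ^ h := by
    rw [← pow_add]; congr 1; omega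
  have f1 : (1 : ℝ) ≤ (d : ℝ) ^ (q - h) := one_le_pow₀ hd1
  have f2 : (d : ℝ) ^ h ≤ (d : ℝ) ^ (n - q) := pow_le_pow_right₀ hd1 (by omega)
  nlinarith [mul_nonneg (sub_nonneg.2 f1) (sub_nonneg.2 f2)]

lemma key_product_ineq {d n : ℕ} (hd : 2 ≤ d) (h : ℕ) (h1 : 1 ≤ h) (h2 : h ≤ n - 1)
    (hn : 2 ≤ n) :
    ((d : ℝ) ^ h - 1) * ((d : ℝ) ^ (n - h) - 1)
      ≤ ((d : ℝ) ^ (n / 2) - 1) * ((d : ℝ) ^ (n - n / 2) - 1) := by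
  have hd1 : (1 : ℝ) ≤ (d : ℝ) := by exact_mod_cast le_trans (by norm_num) hd
  have hprod : ∀ a : ℕ, 1 ≤ a → a ≤ n - 1 →
      (d : ℝ) ^ a * (d : ℝ) ^ (n - a) = (d : ℝ) ^ n := by
    intro a _ _
    rw [← pow_add]; congr 1; omega
  have hsum : (d : ℝ) ^ (n / 2) + (d : ℝ) ^ (n - n / 2) ≤ (d : ℝ) ^ h + (d : ℝ) ^ (n - h) := by
    by_cases hc : h ≤ n / 2
    · exact sum_pow_min_le hd h h1 hc
    · have h1' : 1 ≤ n - h := by omega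
      have h2' : n - h ≤ n / 2 := by omega
      have := sum_pow_min_le hd (n - h) h1' h2'
      have hnn : n - (n - h) = h := by omega
      rw [hnn] at this
      linarith
  have hq1 : 1 ≤ n / 2 := by omega
  have hq2 : n / 2 ≤ n - 1 := by omega
  have e1 := hprod h h1 h2
  have e2 := hprod (n / 2) hq1 hq2
  nlinarith [e1, e2, hsum]

/-- (Theorem 4(ii)) For a pure `n`-partite state (`n = m + 3 ≥ 3`) that is separable under
some bipartition but entangled under the bipartition `j₁⋯j_{n-1} | j_n` (the permutation
`j₁,…,j_n` of the factors being given by `σ`), the Ky Fan norms of `T_{j₁⋯j_{n-1}|j_n}`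
satisfy the stated odd/even bounds. -/
theorem kyFan_rest_vs_one_of_entangled (d : ℕ) (hd : 2 ≤ d)
    (lam : Fin (d ^ 2 - 1) → Matrix (Fin d) (Fin d) ℂ)
    (hherm : ∀ i, (lam i).IsHermitian)
    (htr : ∀ i, (lam i).trace = 0)
    (horth : ∀ i j, (lam i * lam j).trace = if i = j then 2 else 0)
    (m : ℕ) (σ : Equiv.Perm (Fin (m + 3)))
    (ρ : Matrix (Fin (m + 3) → Fin d) (Fin (m + 3) → Fin d) ℂ)
    (hpsd : ρ.PosSemidef) (htrρ : ρ.trace = 1) (hpure : ρ * ρ = ρ)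
    (hsome : ∃ A : Finset (Fin (m + 3)), A.Nonempty ∧ A ≠ Finset.univ ∧ SepUnder ρ A)
    (hent : ¬ SepUnder ρ ({σ (Fin.last (m + 2))}ᶜ))
    (k : ℕ) (hk1 : 1 ≤ k) (hk2 : k ≤ d ^ 2 - 1) :
    (Odd (m + 3) →
      kyFan k (Matrix.of fun (r : Fin (m + 2) → Fin (d ^ 2 - 1)) (c : Fin (d ^ 2 - 1)) =>
          corrFull lam ρ (fun j => (Fin.snoc r c : Fin (m + 3) → Fin (d ^ 2 - 1)) (σ.symm j)))
        ≤ Real.sqrt (2 ^ (m + 3) * k * ((d : ℝ) ^ ((m + 3) / 2) - 1) *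
            ((d : ℝ) ^ ((m + 3) - (m + 3) / 2) - 1) / (d : ℝ) ^ (m + 3)))
    ∧ (Even (m + 3) →
      kyFan k (Matrix.of fun (r : Fin (m + 2) → Fin (d ^ 2 - 1)) (c : Fin (d ^ 2 - 1)) =>
          corrFull lam ρ (fun j => (Fin.snoc r c : Fin (m + 3) → Fin (d ^ 2 - 1)) (σ.symm j)))
        ≤ Real.sqrt (2 ^ (m + 3) * k * ((d : ℝ) ^ ((m + 3) / 2) - 1) ^ 2
            / (d : ℝ) ^ (m + 3))) := by
  obtain ⟨A, hAne, hAuniv, ρA, ρB, hApsd, hAtr, hBpsd, hBtr, hfact⟩ := hsome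
  haveI : Nonempty {j // j ∈ A} := by
    obtain ⟨j0, hj0⟩ := hAne
    exact ⟨⟨j0, hj0⟩⟩
  haveI : Nonempty {j // j ∉ A} := by
    have : ∃ j, j ∉ A := by
      by_contra hcon
      push_neg at hcon
      exact hAuniv (Finset.eq_univ_iff_forall.2 hcon)
    obtain ⟨j0, hj0⟩ := this
    exact ⟨⟨j0, hj0⟩⟩
  have hd1 : (1 : ℝ) ≤ (d : ℝ) := by exact_mod_cast le_trans (by norm_num) hd
  have hd0 : (0 : ℝ) < (d : ℝ) := lt_of_lt_of_le one_pos hd1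
  have hcardA : Fintype.card {j // j ∈ A} = A.card := Fintype.card_coe A
  have hcardB : Fintype.card {j // j ∉ A} = (m + 3) - A.card := by
    rw [Fintype.card_subtype_compl, hcardA, Fintype.card_fin]
  have hA1 : 1 ≤ A.card := hAne.card_pos
  have hA2 : A.card ≤ (m + 3) - 1 := by
    have : A.card < (m + 3) := by
      have h1 := Finset.card_lt_card (Finset.ssubset_univ_iff.2 hAuniv)
      simpa using h1
    omega
  -- abbreviations
  set SA : ℝ := ∑ b : {j // j ∈ A} → Fin (d ^ 2 - 1), Complex.normSq
      ((ρA * Matrix.of (fun v w : {j // j ∈ A} → Fin d =>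
        ∏ j, lam (b j) (v j) (w j))).trace) with hSAdef
  set SB : ℝ := ∑ b : {j // j ∉ A} → Fin (d ^ 2 - 1), Complex.normSq
      ((ρB * Matrix.of (fun v w : {j // j ∉ A} → Fin d =>
        ∏ j, lam (b j) (v j) (w j))).trace) with hSBdef
  have hSAnn : 0 ≤ SA := Finset.sum_nonneg fun b _ => Complex.normSq_nonneg _
  have hSBnn : 0 ≤ SB := Finset.sum_nonneg fun b _ => Complex.normSq_nonneg _
  have hSAle : SA ≤ 2 ^ A.card * ((d : ℝ) ^ A.card - 1) / (d : ℝ) ^ A.card := by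
    have := subsystem_bound (J := {j // j ∈ A}) hd lam hherm htr horth ρA hApsd hAtr
    rwa [hcardA] at this
  have hSBle : SB ≤ 2 ^ ((m + 3) - A.card) * ((d : ℝ) ^ ((m + 3) - A.card) - 1) / (d : ℝ) ^ ((m + 3) - A.card) := by
    have := subsystem_bound (J := {j // j ∉ A}) hd lam hherm htr horth ρB hBpsd hBtr
    rwa [hcardB] at this
  have hfac : ∑ a : Fin (m + 3) → Fin (d ^ 2 - 1), Complex.normSq
      ((ρ * Matrix.of (fun v w : Fin (m + 3) → Fin d => ∏ j, lam (a j) (v j) (w j))).trace)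
      = SA * SB := sum_normSq_factor lam ρ ρA ρB hfact
  -- bound on the full sum
  have hpowA : (0 : ℝ) < (d : ℝ) ^ A.card := by positivity
  have hpowB : (0 : ℝ) < (d : ℝ) ^ ((m + 3) - A.card) := by positivity
  have hpown : (0 : ℝ) < (d : ℝ) ^ (m + 3) := by positivity
  have hbAnn : 0 ≤ 2 ^ A.card * ((d : ℝ) ^ A.card - 1) / (d : ℝ) ^ A.card := by
    have h1 : (1 : ℝ) ≤ (d : ℝ) ^ A.card := one_le_pow₀ hd1
    apply div_nonneg (mul_nonneg (by positivity) (by linarith)) (le_of_lt hpowA)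
  have hSfull : SA * SB ≤ 2 ^ (m + 3) * ((d : ℝ) ^ A.card - 1) * ((d : ℝ) ^ ((m + 3) - A.card) - 1)
      / (d : ℝ) ^ (m + 3) := by
    have hmul := mul_le_mul hSAle hSBle hSBnn hbAnn
    have heq : 2 ^ A.card * ((d : ℝ) ^ A.card - 1) / (d : ℝ) ^ A.card *
        (2 ^ ((m + 3) - A.card) * ((d : ℝ) ^ ((m + 3) - A.card) - 1) / (d : ℝ) ^ ((m + 3) - A.card))
        = 2 ^ (m + 3) * ((d : ℝ) ^ A.card - 1) * ((d : ℝ) ^ ((m + 3) - A.card) - 1) / (d : ℝ) ^ (m + 3) := by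
      have h2 : (2 : ℝ) ^ A.card * 2 ^ ((m + 3) - A.card) = 2 ^ (m + 3) := by
        rw [← pow_add]; congr 1; omega
      have hdpow : (d : ℝ) ^ A.card * (d : ℝ) ^ ((m + 3) - A.card) = (d : ℝ) ^ (m + 3) := by
        rw [← pow_add]; congr 1; omega
      rw [div_mul_div_comm]
      rw [show 2 ^ A.card * ((d : ℝ) ^ A.card - 1) *
          (2 ^ ((m + 3) - A.card) * ((d : ℝ) ^ ((m + 3) - A.card) - 1))
          = (2 ^ A.card * 2 ^ ((m + 3) - A.card)) *
            (((d : ℝ) ^ A.card - 1) * ((d : ℝ) ^ ((m + 3) - A.card) - 1)) from by ring,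
        h2, hdpow]
      ring
    rw [heq] at hmul
    exact hmul
  have hkeyprod : ((d : ℝ) ^ A.card - 1) * ((d : ℝ) ^ ((m + 3) - A.card) - 1)
      ≤ ((d : ℝ) ^ ((m + 3) / 2) - 1) * ((d : ℝ) ^ ((m + 3) - ((m + 3) / 2)) - 1) :=
    key_product_ineq hd A.card hA1 hA2 (by omega)
  have hkeyprod : ((d : ℝ) ^ A.card - 1) * ((d : ℝ) ^ ((m + 3) - A.card) - 1)
      ≤ ((d : ℝ) ^ ((m + 3) / 2) - 1) * ((d : ℝ) ^ ((m + 3) - ((m + 3) / 2)) - 1) :=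
    key_product_ineq hd A.card hA1 hA2 (by omega)
  have hkey : 2 ^ (m + 3) * ((d : ℝ) ^ A.card - 1) * ((d : ℝ) ^ ((m + 3) - A.card) - 1) / (d : ℝ) ^ (m + 3)
      ≤ 2 ^ (m + 3) * ((d : ℝ) ^ ((m + 3) / 2) - 1) * ((d : ℝ) ^ ((m + 3) - ((m + 3) / 2)) - 1) / (d : ℝ) ^ (m + 3) := by
    rw [mul_assoc, mul_assoc]
    gcongr (2 : ℝ) ^ (m + 3) * ?_ / (d : ℝ) ^ (m + 3)
  -- the Frobenius bound on the correlation matrix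
  have hre_sq : ∀ z : ℂ, z.re ^ 2 ≤ Complex.normSq z := by
    intro z
    rw [Complex.normSq_apply]
    nlinarith [sq_nonneg z.im]
  have hfrob : ∑ c : Fin (d ^ 2 - 1), ∑ r : Fin (m + 2) → Fin (d ^ 2 - 1),
      ((Matrix.of fun (r : Fin (m + 2) → Fin (d ^ 2 - 1)) (c : Fin (d ^ 2 - 1)) =>
        corrFull lam ρ (fun j => (Fin.snoc r c : Fin (m + 3) → Fin (d ^ 2 - 1)) (σ.symm j))) r c) ^ 2
      ≤ SA * SB := by
    rw [← hfac]
    rw [← sum_reindex_snoc σ (fun a : Fin (m + 3) → Fin (d ^ 2 - 1) => Complex.normSq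
      ((ρ * Matrix.of (fun v w : Fin (m + 3) → Fin d => ∏ j, lam (a j) (v j) (w j))).trace))]
    refine Finset.sum_le_sum fun c _ => Finset.sum_le_sum fun r _ => ?_
    exact hre_sq _
  -- main bound
  have hmain : kyFan k (Matrix.of fun (r : Fin (m + 2) → Fin (d ^ 2 - 1)) (c : Fin (d ^ 2 - 1)) =>
      corrFull lam ρ (fun j => (Fin.snoc r c : Fin (m + 3) → Fin (d ^ 2 - 1)) (σ.symm j)))
      ≤ Real.sqrt (2 ^ (m + 3) * k * ((d : ℝ) ^ ((m + 3) / 2) - 1) * ((d : ℝ) ^ ((m + 3) - ((m + 3) / 2)) - 1) / (d : ℝ) ^ (m + 3)) := by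
    refine le_trans (kyFan_le_sqrt k _) (Real.sqrt_le_sqrt ?_)
    have hk0 : (0 : ℝ) ≤ (k : ℝ) := Nat.cast_nonneg k
    calc (k : ℝ) * ∑ c : Fin (d ^ 2 - 1), ∑ r : Fin (m + 2) → Fin (d ^ 2 - 1),
          ((Matrix.of fun (r : Fin (m + 2) → Fin (d ^ 2 - 1)) (c : Fin (d ^ 2 - 1)) =>
            corrFull lam ρ (fun j => (Fin.snoc r c : Fin (m + 3) → Fin (d ^ 2 - 1)) (σ.symm j))) r c) ^ 2
        ≤ (k : ℝ) * (SA * SB) := mul_le_mul_of_nonneg_left hfrob hk0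
      _ ≤ (k : ℝ) * (2 ^ (m + 3) * ((d : ℝ) ^ ((m + 3) / 2) - 1) * ((d : ℝ) ^ ((m + 3) - ((m + 3) / 2)) - 1) / (d : ℝ) ^ (m + 3)) :=
          mul_le_mul_of_nonneg_left (le_trans hSfull hkey) hk0
      _ = 2 ^ (m + 3) * k * ((d : ℝ) ^ ((m + 3) / 2) - 1) * ((d : ℝ) ^ ((m + 3) - ((m + 3) / 2)) - 1) / (d : ℝ) ^ (m + 3) := by ring
  constructor
  · intro _
    exact hmain
  · intro heven
    have hqq : (m + 3) - ((m + 3) / 2) = ((m + 3) / 2) := by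
      obtain ⟨t, ht⟩ := heven
      omega
    rw [hqq] at hmain
    have heq2 : 2 ^ (m + 3) * (k : ℝ) * ((d : ℝ) ^ ((m + 3) / 2) - 1) ^ 2 / (d : ℝ) ^ (m + 3)
        = 2 ^ (m + 3) * k * ((d : ℝ) ^ ((m + 3) / 2) - 1) * ((d : ℝ) ^ ((m + 3) / 2) - 1) / (d : ℝ) ^ (m + 3) := by ring
    rw [heq2]
    exact hmain
end
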